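/- Let a < b be integers and f have a continuous derivative on [a,b]. Then Σ_{n=a}^{b} f(n) = ∫_a^b f(x)dx + ∫_a^b f'(x)ψ(x)dx + (f(a)+f(b))/2, where ψ(x) = x - ⌊x⌋ - 1/2. -/

import Mathlib

open Real MeasureTheory intervalIntegral

private lemma em_floor_ae (n : ℤ) (f' : ℝ → ℝ) :
    ∀ᵐ x ∂(volume : Measure ℝ), x ∈ Set.uIoc (n:ℝ) ((n:ℝ)+1) →
      f' x * (x - ⌊x⌋ - 1/2) = f' x * (x - n - 1/2) := by
  have h2 : ∀ᵐ x ∂(volume : Measure ℝ), x ≠ ((n:ℝ)+1) := by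
    refine ae_iff.2 ?_
    have : {x : ℝ | ¬ x ≠ (n:ℝ)+1} = {((n:ℝ)+1)} := by ext x; simp
    rw [this]
    exact Real.volume_singleton
  filter_upwards [h2] with x hne hx
  rw [Set.uIoc_of_le (by linarith : (n:ℝ) ≤ (n:ℝ)+1)] at hx
  have hfl : ⌊x⌋ = n := by
    rw [Int.floor_eq_iff]
    exact ⟨hx.1.le, lt_of_le_of_ne hx.2 hne⟩
  rw [hfl]

private lemma em_floor_ae' (n : ℤ) (f' : ℝ → ℝ) :
    (fun x : ℝ => f' x * (x - ⌊x⌋ - 1/2))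
      =ᵐ[volume.restrict (Set.uIoc (n:ℝ) ((n:ℝ)+1))]
    (fun x : ℝ => f' x * (x - n - 1/2)) :=
  (ae_restrict_iff' measurableSet_uIoc).2 (em_floor_ae n f')

private lemma em_step (f f' : ℝ → ℝ) (n : ℤ)
    (hd : ∀ x ∈ Set.Icc (n:ℝ) ((n:ℝ)+1), HasDerivAt f (f' x) x)
    (hc : ContinuousOn f' (Set.Icc (n:ℝ) ((n:ℝ)+1))) :
    IntervalIntegrable (fun x => f' x * ((x : ℝ) - ⌊x⌋ - 1/2)) volume (n:ℝ) ((n:ℝ)+1) ∧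
    (∫ x in (n:ℝ)..((n:ℝ)+1), f x) + (∫ x in (n:ℝ)..((n:ℝ)+1), f' x * (x - ⌊x⌋ - 1/2))
      = (f n + f ((n:ℝ)+1)) / 2 := by
  have hle : (n:ℝ) ≤ (n:ℝ)+1 := by linarith
  have huIcc : Set.uIcc (n:ℝ) ((n:ℝ)+1) = Set.Icc (n:ℝ) ((n:ℝ)+1) := Set.uIcc_of_le hle
  have hcf : ContinuousOn f (Set.Icc (n:ℝ) ((n:ℝ)+1)) :=
    fun x hx => (hd x hx).continuousAt.continuousWithinAt
  have hsimple : IntervalIntegrable (fun x : ℝ => f' x * (x - n - 1/2)) volume (n:ℝ) ((n:ℝ)+1) := by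
    apply ContinuousOn.intervalIntegrable
    rw [huIcc]
    exact hc.mul (by fun_prop)
  have hI : IntervalIntegrable (fun x : ℝ => f' x * (x - ⌊x⌋ - 1/2)) volume (n:ℝ) ((n:ℝ)+1) := by
    rw [intervalIntegrable_iff] at hsimple ⊢
    exact hsimple.congr (em_floor_ae' n f').symm
  refine ⟨hI, ?_⟩
  have hInt : (∫ x in (n:ℝ)..((n:ℝ)+1), f' x * (x - ⌊x⌋ - 1/2))
      = ∫ x in (n:ℝ)..((n:ℝ)+1), f' x * (x - n - 1/2) :=
    intervalIntegral.integral_congr_ae (em_floor_ae n f')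
  rw [hInt]
  have hv : ∀ x ∈ Set.uIcc (n:ℝ) ((n:ℝ)+1),
      HasDerivAt (fun x : ℝ => x - n - 1/2) 1 x := by
    intro x _
    simpa using ((hasDerivAt_id x).sub_const (n:ℝ)).sub_const (1/2)
  have hu : ∀ x ∈ Set.uIcc (n:ℝ) ((n:ℝ)+1), HasDerivAt f (f' x) x := by
    rw [huIcc]; exact hd
  have hu' : IntervalIntegrable f' volume (n:ℝ) ((n:ℝ)+1) := by
    apply ContinuousOn.intervalIntegrable; rw [huIcc]; exact hc
  have hv' : IntervalIntegrable (fun _ : ℝ => (1:ℝ)) volume (n:ℝ) ((n:ℝ)+1) :=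
    intervalIntegrable_const
  have ibp := intervalIntegral.integral_mul_deriv_eq_deriv_mul hu hv hu' hv'
  simp only [mul_one] at ibp
  rw [ibp]
  ring

private lemma em_sum_Icc (g : ℤ → ℝ) (a : ℤ) (N : ℕ) :
    ∑ n ∈ Finset.Icc a (a + N), g n = ∑ k ∈ Finset.range (N+1), g (a + k) := by
  induction N with
  | zero => simp
  | succ N ih =>
    have hins : Finset.Icc a (a + ((N:ℕ)+1 : ℕ)) = insert (a + (N:ℤ) + 1) (Finset.Icc a (a + (N:ℤ))) := by
      ext x; simp only [Finset.mem_Icc, Finset.mem_insert]; push_cast; omega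
    rw [hins, Finset.sum_insert (by simp only [Finset.mem_Icc]; omega), Finset.sum_range_succ, ← ih]
    push_cast
    ring_nf

private lemma em_telescope (g : ℕ → ℝ) (N : ℕ) :
    ∑ k ∈ Finset.range N, (g k + g (k+1))/2 + (g 0 + g N)/2
      = ∑ k ∈ Finset.range (N+1), g k := by
  induction N with
  | zero => simp
  | succ N ih =>
    rw [Finset.sum_range_succ, Finset.sum_range_succ (f := g) (n := N+1)]
    rw [Finset.sum_range_succ (f := g)] at ih ⊢
    linarith [ih]

theorem euler_maclaurin_first_order (a b : ℤ) (hab : a < b) (f f' : ℝ → ℝ)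
    (hderiv : ∀ x ∈ Set.Icc (a : ℝ) b, HasDerivAt f (f' x) x)
    (hcont : ContinuousOn f' (Set.Icc (a : ℝ) b)) :
    ∑ n ∈ Finset.Icc a b, f n =
      (∫ x in (a : ℝ)..b, f x) +
      (∫ x in (a : ℝ)..b, f' x * (x - ⌊x⌋ - 1 / 2)) +
      (f a + f b) / 2 := by
  set N : ℕ := (b - a).toNat with hNdef
  have hN : (N:ℤ) = b - a := Int.toNat_of_nonneg (by omega)
  set c : ℕ → ℝ := fun k => (a:ℝ) + k with hc
  have hca : c 0 = (a:ℝ) := by simp [hc]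
  have hcb : c N = (b:ℝ) := by
    simp only [hc]
    have : ((N:ℤ):ℝ) = (b:ℝ) - (a:ℝ) := by rw [hN]; push_cast; ring
    push_cast at this ⊢
    linarith
  have hsub : ∀ k : ℕ, k < N → Set.Icc (c k) (c (k+1)) ⊆ Set.Icc (a:ℝ) b := by
    intro k hk
    apply Set.Icc_subset_Icc
    · simp [hc]
    · have : (k:ℤ) + 1 ≤ N := by omega
      have : ((k:ℝ) + 1) ≤ (N:ℝ) := by exact_mod_cast this
      simp only [hc]
      push_cast
      have hNb : ((N:ℝ)) = (b:ℝ) - (a:ℝ) := by exact_mod_cast hN ▸ (by push_cast; ring : ((b - a : ℤ):ℝ) = (b:ℝ) - (a:ℝ))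
      linarith
  have hstep : ∀ k : ℕ, k < N →
      IntervalIntegrable (fun x => f' x * ((x:ℝ) - ⌊x⌋ - 1/2)) volume (c k) (c (k+1)) ∧
      (∫ x in (c k)..(c (k+1)), f x) + (∫ x in (c k)..(c (k+1)), f' x * (x - ⌊x⌋ - 1/2))
        = (f (c k) + f (c (k+1))) / 2 := by
    intro k hk
    have hck : c k = ((a + k : ℤ) : ℝ) := by simp only [hc]; push_cast; ring
    have hck1 : c (k+1) = ((a + k : ℤ) : ℝ) + 1 := by simp only [hc]; push_cast; ring
    have hsub2 : Set.Icc ((a + k : ℤ) : ℝ) (((a + k : ℤ) : ℝ)+1) ⊆ Set.Icc (a:ℝ) b := by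
      rw [← hck1, ← hck]; exact hsub k hk
    have := em_step f f' (a + k)
      (fun x hx => hderiv x (hsub2 hx))
      (hcont.mono hsub2)
    rw [hck, hck1]
    exact this
  have h1 : ∀ k : ℕ, k < N → IntervalIntegrable f volume (c k) (c (k+1)) := by
    intro k hk
    apply ContinuousOn.intervalIntegrable
    have : Set.uIcc (c k) (c (k+1)) = Set.Icc (c k) (c (k+1)) := by
      apply Set.uIcc_of_le; simp only [hc]; push_cast; linarith
    rw [this]
    exact fun x hx => ((hderiv x (hsub k hk hx)).continuousAt).continuousWithinAt
  have h2 : ∀ k : ℕ, k < N →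
      IntervalIntegrable (fun x => f' x * ((x:ℝ) - ⌊x⌋ - 1/2)) volume (c k) (c (k+1)) :=
    fun k hk => (hstep k hk).1
  have hIf : (∫ x in (a:ℝ)..b, f x) = ∑ k ∈ Finset.range N, ∫ x in (c k)..(c (k+1)), f x := by
    rw [← hca, ← hcb]
    exact (intervalIntegral.sum_integral_adjacent_intervals h1).symm
  have hIg : (∫ x in (a:ℝ)..b, f' x * (x - ⌊x⌋ - 1/2))
      = ∑ k ∈ Finset.range N, ∫ x in (c k)..(c (k+1)), f' x * (x - ⌊x⌋ - 1/2) := by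
    rw [← hca, ← hcb]
    exact (intervalIntegral.sum_integral_adjacent_intervals h2).symm
  have hb' : b = a + (N:ℤ) := by omega
  have hsum : ∑ n ∈ Finset.Icc a b, f n = ∑ k ∈ Finset.range (N+1), f (c k) := by
    rw [hb', em_sum_Icc]
    apply Finset.sum_congr rfl
    intro k _
    congr 1
    simp only [hc]; push_cast; ring
  rw [hsum, hIf, hIg, ← Finset.sum_add_distrib]
  have : ∑ k ∈ Finset.range N,
      ((∫ x in (c k)..(c (k+1)), f x) + ∫ x in (c k)..(c (k+1)), f' x * (x - ⌊x⌋ - 1/2))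
      = ∑ k ∈ Finset.range N, (f (c k) + f (c (k+1))) / 2 := by
    apply Finset.sum_congr rfl
    intro k hk
    exact (hstep k (Finset.mem_range.mp hk)).2
  rw [this, ← hca, ← hcb]
  exact (em_telescope (fun k => f (c k)) N).symm
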